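/- Let u, v ∈ L²(ℝ, ℂ) vanish almost everywhere outside the interval [0, 1]. If their autoconvolutions agree, i.e. ∫_ℝ u(s) u(t − s) ds = ∫_ℝ v(s) v(t − s) ds for almost every t ∈ ℝ, then u = v almost everywhere or u = −v almost everywhere. (Uniqueness of deautoconvolution up to global sign.) -/

import Mathlib

set_option maxHeartbeats 1000000

open MeasureTheory Real Complex FourierTransform Set Metric
open scoped ContDiff RealInnerProductSpace

lemma integrable_mul_of_bdd {u : ℝ → ℂ} (hu : Integrable u volume)
    (hsupp : ∀ᵐ t ∂volume, t ∉ Set.Icc (0 : ℝ) 1 → u t = 0)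
    {g : ℝ → ℂ} (hg : AEStronglyMeasurable g volume) {c : ℝ}
    (hbd : ∀ s ∈ Set.Icc (0:ℝ) 1, ‖g s‖ ≤ c) :
    Integrable (fun s => u s * g s) volume := by
  refine Integrable.mono' (hu.norm.const_mul c) (hu.1.mul hg) ?_
  filter_upwards [hsupp] with s hs
  by_cases h : s ∈ Set.Icc (0:ℝ) 1
  · rw [norm_mul]
    calc ‖u s‖ * ‖g s‖ ≤ ‖u s‖ * c := by
          exact mul_le_mul_of_nonneg_left (hbd s h) (norm_nonneg _)
      _ = c * ‖u s‖ := mul_comm _ _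
  · simp [hs h]

lemma integrable_of_l2_supp {u : ℝ → ℂ} (hu : MemLp u 2 volume)
    (hsupp : ∀ᵐ t ∂volume, t ∉ Set.Icc (0 : ℝ) 1 → u t = 0) :
    Integrable u volume := by
  have hmeas : MeasurableSet (Set.Icc (0:ℝ) 1) := measurableSet_Icc
  have hint : IntegrableOn u (Set.Icc (0:ℝ) 1) volume := by
    have hfin : IsFiniteMeasure (volume.restrict (Set.Icc (0:ℝ) 1)) := by
      constructor
      rw [Measure.restrict_apply_univ]
      exact measure_Icc_lt_top
    exact (hu.restrict (Set.Icc (0:ℝ) 1)).integrable (by norm_num)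
  have heq : u =ᵐ[volume] (Set.Icc (0:ℝ) 1).indicator u := by
    filter_upwards [hsupp] with t ht
    by_cases h : t ∈ Set.Icc (0:ℝ) 1
    · simp [h]
    · simp [h, ht h]
  exact (integrable_indicator_iff hmeas |>.2 hint).congr heq.symm

noncomputable def FTc (u : ℝ → ℂ) (z : ℂ) : ℂ :=
  ∫ s : ℝ, u s * Complex.exp (-(2 * Real.pi * s) * z * Complex.I)

lemma norm_myexp (s : ℝ) (z : ℂ) : ‖Complex.exp (-(2 * Real.pi * s) * z * Complex.I)‖
    = Real.exp (2 * Real.pi * s * z.im) := by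
  rw [Complex.norm_exp]
  congr 1
  have : (-(2 * Real.pi * s) * z * Complex.I) = ((-(2 * Real.pi * s) : ℝ) : ℂ) * (z * Complex.I) := by
    push_cast; ring
  rw [this, Complex.re_ofReal_mul, Complex.mul_I_re]
  ring

lemma myexp_bound {s : ℝ} (hs : s ∈ Set.Icc (0:ℝ) 1) {z : ℂ} {R : ℝ} (hz : |z.im| ≤ R) :
    ‖Complex.exp (-(2 * Real.pi * s) * z * Complex.I)‖ ≤ Real.exp (2 * Real.pi * R) := by
  rw [norm_myexp]
  apply Real.exp_le_exp.2
  obtain ⟨h0, h1⟩ := hs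
  calc 2 * Real.pi * s * z.im ≤ |2 * Real.pi * s * z.im| := le_abs_self _
    _ = 2 * Real.pi * s * |z.im| := by
        rw [abs_mul]
        congr 1
        rw [_root_.abs_of_nonneg (by positivity)]
    _ ≤ 2 * Real.pi * 1 * R := by
        apply mul_le_mul (by nlinarith [Real.pi_pos]) hz (abs_nonneg _) (by positivity)
    _ = 2 * Real.pi * R := by ring

lemma FTc_differentiable {u : ℝ → ℂ} (hu : Integrable u volume)
    (hsupp : ∀ᵐ t ∂volume, t ∉ Set.Icc (0 : ℝ) 1 → u t = 0) :
    Differentiable ℂ (FTc u) := by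
  intro z₀
  set R : ℝ := ‖z₀‖ + 1 with hR
  set C : ℝ := 2 * Real.pi * Real.exp (2 * Real.pi * R) with hC
  set F : ℂ → ℝ → ℂ := fun z s => u s * Complex.exp (-(2 * Real.pi * s) * z * Complex.I) with hF
  set F' : ℂ → ℝ → ℂ := fun z s =>
    u s * (-(2 * Real.pi * s) * Complex.I * Complex.exp (-(2 * Real.pi * s) * z * Complex.I))
    with hF'
  have hcont : ∀ z : ℂ, Continuous fun s : ℝ => Complex.exp (-(2 * Real.pi * s) * z * Complex.I) := by
    intro z; fun_prop
  have hcont' : ∀ z : ℂ, Continuous fun s : ℝ =>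
      -(2 * Real.pi * s) * Complex.I * Complex.exp (-(2 * Real.pi * s) * z * Complex.I) := by
    intro z; fun_prop
  have himle : ∀ z ∈ ball z₀ 1, |z.im| ≤ R := by
    intro z hz
    calc |z.im| ≤ ‖z‖ := Complex.abs_im_le_norm z
      _ ≤ ‖z₀‖ + ‖z - z₀‖ := by
          have := norm_sub_norm_le z z₀
          linarith [norm_sub_norm_le z z₀]
      _ ≤ ‖z₀‖ + 1 := by
          have : ‖z - z₀‖ < 1 := by simpa [dist_eq_norm] using hz
          linarith
  have key := hasDerivAt_integral_of_dominated_loc_of_deriv_le (F := F) (F' := F')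
      (x₀ := z₀) (bound := fun s => ‖u s‖ * C) (μ := volume) (ball_mem_nhds z₀ one_pos)
      (Filter.Eventually.of_forall fun z => hu.1.mul ((hcont z).aestronglyMeasurable))
      (integrable_mul_of_bdd hu hsupp ((hcont z₀).aestronglyMeasurable)
        (fun s hs => myexp_bound hs (himle z₀ (mem_ball_self one_pos))))
      (hu.1.mul ((hcont' z₀).aestronglyMeasurable))
      ?_ (hu.norm.mul_const C) ?_
  · exact ⟨_, key.2⟩
  · -- bound
    filter_upwards [hsupp] with s hs z hz
    by_cases h : s ∈ Set.Icc (0:ℝ) 1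
    · rw [hF']
      rw [norm_mul]
      have h1 : ‖-(2 * Real.pi * (s:ℂ)) * Complex.I‖ ≤ 2 * Real.pi := by
        rw [norm_mul, Complex.norm_I, mul_one, norm_neg]
        have : (2 * Real.pi * (s:ℂ)) = ((2 * Real.pi * s : ℝ) : ℂ) := by push_cast; ring
        rw [this, Complex.norm_real]
        rw [Real.norm_eq_abs, _root_.abs_of_nonneg (by nlinarith [Real.pi_pos, h.1])]
        nlinarith [Real.pi_pos, h.2]
      have h2 := myexp_bound h (himle z hz)
      calc ‖u s‖ * ‖-(2 * ↑Real.pi * (s:ℂ)) * Complex.I * Complex.exp (-(2 * ↑Real.pi * ↑s) * z * Complex.I)‖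
          ≤ ‖u s‖ * (2 * Real.pi * Real.exp (2 * Real.pi * R)) := by
            apply mul_le_mul_of_nonneg_left ?_ (norm_nonneg _)
            rw [norm_mul]
            exact mul_le_mul h1 h2 (norm_nonneg _) (by positivity)
        _ = ‖u s‖ * C := by rw [hC]
    · simp [hF', hs h]
  · -- differentiability
    filter_upwards with s z _
    have : HasDerivAt (fun z : ℂ => Complex.exp (-(2 * Real.pi * s) * z * Complex.I))
        (-(2 * Real.pi * s) * Complex.I * Complex.exp (-(2 * Real.pi * s) * z * Complex.I)) z := by
      have h2 : HasDerivAt (fun z : ℂ => -(2 * Real.pi * s) * z * Complex.I)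
          (-(2 * Real.pi * s) * Complex.I) z := by
        simpa using ((hasDerivAt_id z).const_mul (-(2 * Real.pi * (s:ℂ)))).mul_const Complex.I
      simpa [mul_comm] using h2.cexp
    exact this.const_mul (u s)

lemma analytic_dichotomy {g h : ℂ → ℂ} (hg : Differentiable ℂ g) (hh : Differentiable ℂ h)
    (hzero : ∀ x : ℝ, g x * h x = 0) : (∀ x : ℝ, g x = 0) ∨ (∀ x : ℝ, h x = 0) := by
  by_contra hcon
  push_neg at hcon
  obtain ⟨⟨x₁, hx₁⟩, ⟨x₂, hx₂⟩⟩ := hcon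
  set gr : ℝ → ℂ := fun x => g x with hgr
  set hr : ℝ → ℂ := fun x => h x with hhr
  have hganal : AnalyticOnNhd ℝ gr Set.univ := by
    intro x _
    exact ((hg.analyticAt (x:ℂ)).restrictScalars).comp (Complex.ofRealCLM.analyticAt x)
  have hhanal : AnalyticOnNhd ℝ hr Set.univ := by
    intro x _
    exact ((hh.analyticAt (x:ℂ)).restrictScalars).comp (Complex.ofRealCLM.analyticAt x)
  have hev : hr =ᶠ[nhds x₁] 0 := by
    have hgc : ContinuousAt gr x₁ := (hganal x₁ (Set.mem_univ _)).continuousAt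
    filter_upwards [hgc.eventually_ne hx₁] with x hx
    have := hzero x
    rcases mul_eq_zero.1 this with h1 | h1
    · exact absurd h1 hx
    · exact h1
  have := hhanal.eqOn_zero_of_preconnected_of_eventuallyEq_zero isPreconnected_univ
    (Set.mem_univ x₁) hev
  exact hx₂ (this (Set.mem_univ x₂))

noncomputable def charE (ξ : ℝ) (t : ℝ) : ℂ :=
  Complex.exp (-(2 * Real.pi * t) * (ξ:ℂ) * Complex.I)

lemma charE_norm (ξ t : ℝ) : ‖charE ξ t‖ = 1 := by
  rw [charE, norm_myexp]
  simp

lemma charE_add (ξ a b : ℝ) : charE ξ (a + b) = charE ξ a * charE ξ b := by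
  rw [charE, charE, charE, ← Complex.exp_add]
  congr 1
  push_cast
  ring

lemma FTc_real_eq (u : ℝ → ℂ) (ξ : ℝ) : FTc u ξ = ∫ s, u s * charE ξ s := rfl

lemma conv_fourier {u : ℝ → ℂ} (hu : Integrable u volume) (ξ : ℝ) :
    ∫ t, (∫ s, u s * u (t - s)) * charE ξ t = FTc u ξ * FTc u ξ := by
  have hEc : Continuous (charE ξ) := by
    unfold charE
    fun_prop
  have base : Integrable (fun p : ℝ × ℝ => u p.1 * u p.2) (volume.prod volume) :=
    hu.mul_prod hu
  have hψ : MeasurePreserving (fun z : ℝ × ℝ => (z.2, z.1 - z.2))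
      ((volume : Measure ℝ).prod volume) ((volume : Measure ℝ).prod volume) :=
    measurePreserving_prod_sub_swap volume volume
  have comp : Integrable (fun z : ℝ × ℝ => u z.2 * u (z.1 - z.2)) (volume.prod volume) := by
    have := (hψ.integrable_comp base.1).2 base
    exact this
  have hint : Integrable (Function.uncurry fun t s => u s * u (t - s) * charE ξ t)
      (volume.prod volume) := by
    have hbdd : Integrable (fun z : ℝ × ℝ => charE ξ z.1 * (u z.2 * u (z.1 - z.2)))
        (volume.prod volume) := by
      apply comp.bdd_mul ((hEc.comp continuous_fst).aestronglyMeasurable)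
      filter_upwards with z
      simp only [Function.comp_apply]
      rw [charE_norm]
    apply hbdd.congr
    filter_upwards with z
    rw [Function.uncurry]
    ring
  calc ∫ t, (∫ s, u s * u (t - s)) * charE ξ t
      = ∫ t, ∫ s, u s * u (t - s) * charE ξ t := by
        congr 1; ext t
        rw [← integral_mul_const]
    _ = ∫ s, ∫ t, u s * u (t - s) * charE ξ t := integral_integral_swap hint
    _ = ∫ s, u s * charE ξ s * FTc u ξ := by
        congr 1; ext s
        have inner1 : ∫ t, u (t - s) * charE ξ t = (∫ r, u r * charE ξ r) * charE ξ s := by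
          have : ∀ t : ℝ, u (t - s) * charE ξ t = (fun r => u r * charE ξ (r + s)) (t - s) := by
            intro t
            simp only []
            congr 2
            ring
          rw [funext this, integral_sub_right_eq_self (fun r => u r * charE ξ (r + s)) s]
          calc ∫ r, u r * charE ξ (r + s) = ∫ r, u r * charE ξ r * charE ξ s := by
                congr 1; ext r
                rw [charE_add]; ring
            _ = (∫ r, u r * charE ξ r) * charE ξ s := integral_mul_const _ _
        calc ∫ t, u s * u (t - s) * charE ξ t = ∫ t, u s * (u (t - s) * charE ξ t) := by
              congr 1; ext t; ring
          _ = u s * ∫ t, u (t - s) * charE ξ t := integral_const_mul _ _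
          _ = u s * ((∫ r, u r * charE ξ r) * charE ξ s) := by rw [inner1]
          _ = u s * charE ξ s * FTc u ξ := by rw [FTc_real_eq]; ring
    _ = (∫ s, u s * charE ξ s) * FTc u ξ := integral_mul_const _ _
    _ = FTc u ξ * FTc u ξ := by rw [FTc_real_eq]

lemma decay_of_compact {gc : ℝ → ℂ} (hsm : ContDiff ℝ ∞ gc) (hsupp : HasCompactSupport gc) :
    ∀ k n : ℕ, ∃ C, ∀ x : ℝ, ‖x‖^k * ‖iteratedFDeriv ℝ n gc x‖ ≤ C := by
  intro k n
  have hc : Continuous fun x : ℝ => ‖x‖^k * ‖iteratedFDeriv ℝ n gc x‖ :=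
    Continuous.mul (by fun_prop) ((hsm.continuous_iteratedFDeriv (by exact_mod_cast le_top)).norm)
  have hcs : HasCompactSupport fun x : ℝ => ‖x‖^k * ‖iteratedFDeriv ℝ n gc x‖ := by
    apply HasCompactSupport.mono ((hsupp.iteratedFDeriv (𝕜 := ℝ) n).norm)
    intro x hx
    simp only [Function.mem_support] at hx ⊢
    intro hcontra
    apply hx
    simp [hcontra]
  obtain ⟨C, hC⟩ := hcs.exists_bound_of_continuous hc
  refine ⟨C, fun x => ?_⟩
  have h1 := hC x
  rwa [Real.norm_eq_abs, _root_.abs_of_nonneg (by positivity)] at h1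

lemma ae_zero_of_fourier_zero {f : ℝ → ℂ} (hf : Integrable f volume)
    (h0 : ∀ ξ : ℝ, 𝓕 f ξ = 0) : f =ᵐ[volume] (0 : ℝ → ℂ) := by
  apply ae_eq_zero_of_integral_contDiff_smul_eq_zero hf.locallyIntegrable
  intro g hgsmooth hgsupp
  set gc : ℝ → ℂ := fun x => (g x : ℂ) with hgc
  have hgc_smooth : ContDiff ℝ ∞ gc := Complex.ofRealCLM.contDiff.comp hgsmooth
  have hgc_supp : HasCompactSupport gc := by
    have : gc = (fun r : ℝ => (r : ℂ)) ∘ g := rfl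
    rw [this]
    exact hgsupp.comp_left (by simp)
  set gS : SchwartzMap ℝ ℂ := ⟨gc, hgc_smooth, decay_of_compact hgc_smooth hgc_supp⟩ with hgS
  set h : SchwartzMap ℝ ℂ := (SchwartzMap.fourierTransformCLE ℂ (SchwartzMap ℝ ℂ)).symm gS with hh
  have hFh : 𝓕 (⇑h) = gc := by
    have h1 : SchwartzMap.fourierTransformCLE ℂ (SchwartzMap ℝ ℂ) h = gS :=
      (SchwartzMap.fourierTransformCLE ℂ (SchwartzMap ℝ ℂ)).apply_symm_apply gS
    have h2 : SchwartzMap.fourierTransformCLE ℂ (SchwartzMap ℝ ℂ) h = 𝓕 h :=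
      SchwartzMap.fourierTransformCLE_apply (R := ℂ) (f := h)
    rw [h1] at h2
    rw [← SchwartzMap.fourier_coe, ← h2]
    rfl
  have hflip : (innerₗ ℝ).flip = innerₗ ℝ :=
    LinearMap.ext fun x => LinearMap.ext fun y => real_inner_comm x y
  have mult := VectorFourier.integral_bilin_fourierIntegral_eq_flip
    (μ := (volume : Measure ℝ)) (ν := (volume : Measure ℝ)) (L := innerₗ ℝ)
    (ContinuousLinearMap.mul ℂ ℂ) Real.continuous_fourierChar continuous_inner
    hf h.integrable
  rw [hflip] at mult
  have key : ∫ x, f x * 𝓕 (⇑h) x = ∫ ξ, 𝓕 f ξ * h ξ := by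
    have m2 := mult.symm
    simp only [ContinuousLinearMap.mul_apply'] at m2
    exact m2
  calc ∫ x, g x • f x = ∫ x, f x * gc x := by
        congr 1; ext x
        rw [hgc, Complex.real_smul, mul_comm]
    _ = ∫ x, f x * 𝓕 (⇑h) x := by rw [hFh]
    _ = ∫ ξ, 𝓕 f ξ * h ξ := key
    _ = 0 := by simp [h0]

lemma FTc_integrand_integrable {u : ℝ → ℂ} (hu : Integrable u volume) (ξ : ℝ) :
    Integrable (fun s => u s * charE ξ s) volume := by
  have hEc : Continuous (charE ξ) := by unfold charE; fun_prop
  have h1 := hu.bdd_mul (c := 1) hEc.aestronglyMeasurable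
    (by filter_upwards with s; rw [charE_norm])
  exact h1.congr (by filter_upwards with s; ring)

lemma fourier_eq_FTc (f : ℝ → ℂ) (ξ : ℝ) : 𝓕 f ξ = FTc f ξ := by
  rw [Real.fourier_eq']
  unfold FTc
  congr 1
  ext s
  rw [smul_eq_mul, mul_comm]
  congr 2
  have hin : (inner ℝ s ξ : ℝ) = s * ξ := by
    simp [RCLike.inner_apply, conj_trivial, mul_comm]
  rw [hin]
  push_cast
  ring

/-- **Uniqueness of deautoconvolution up to global sign.**
If `u, v ∈ L²(ℝ, ℂ)` vanish a.e. outside `[0, 1]` and their autoconvolutions agree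
almost everywhere, then `u = v` a.e. or `u = −v` a.e. -/
theorem deautoconvolution_unique_up_to_sign
    (u v : ℝ → ℂ)
    (hu : MemLp u 2 volume) (hv : MemLp v 2 volume)
    (husupp : ∀ᵐ t ∂volume, t ∉ Set.Icc (0 : ℝ) 1 → u t = 0)
    (hvsupp : ∀ᵐ t ∂volume, t ∉ Set.Icc (0 : ℝ) 1 → v t = 0)
    (hconv : ∀ᵐ t ∂volume,
      (∫ s, u s * u (t - s) ∂volume) = ∫ s, v s * v (t - s) ∂volume) :
    u =ᵐ[volume] v ∨ u =ᵐ[volume] (-v) := by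
  have hu1 : Integrable u volume := integrable_of_l2_supp hu husupp
  have hv1 : Integrable v volume := integrable_of_l2_supp hv hvsupp
  have key : ∀ ξ : ℝ, FTc u ξ * FTc u ξ = FTc v ξ * FTc v ξ := by
    intro ξ
    rw [← conv_fourier hu1 ξ, ← conv_fourier hv1 ξ]
    apply integral_congr_ae
    filter_upwards [hconv] with t ht
    rw [ht]
  have hgd : Differentiable ℂ (fun z => FTc u z - FTc v z) :=
    (FTc_differentiable hu1 husupp).sub (FTc_differentiable hv1 hvsupp)
  have hhd : Differentiable ℂ (fun z => FTc u z + FTc v z) :=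
    (FTc_differentiable hu1 husupp).add (FTc_differentiable hv1 hvsupp)
  have hzero : ∀ x : ℝ, (fun z => FTc u z - FTc v z) x * (fun z => FTc u z + FTc v z) x = 0 := by
    intro x
    simp only []
    linear_combination key x
  rcases analytic_dichotomy hgd hhd hzero with hcase | hcase
  · left
    have hF0 : ∀ ξ : ℝ, 𝓕 (fun t => u t - v t) ξ = 0 := by
      intro ξ
      rw [fourier_eq_FTc]
      have hsplit : FTc (fun t => u t - v t) ξ = FTc u ξ - FTc v ξ := by
        rw [FTc_real_eq, FTc_real_eq, FTc_real_eq, ← integral_sub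
          (FTc_integrand_integrable hu1 ξ) (FTc_integrand_integrable hv1 ξ)]
        congr 1
        ext s
        ring
      rw [hsplit]
      have := hcase ξ
      exact this
    have := ae_zero_of_fourier_zero (hu1.sub hv1) hF0
    filter_upwards [this] with t ht
    simpa [sub_eq_zero] using ht
  · right
    have hF0 : ∀ ξ : ℝ, 𝓕 (fun t => u t + v t) ξ = 0 := by
      intro ξ
      rw [fourier_eq_FTc]
      have hsplit : FTc (fun t => u t + v t) ξ = FTc u ξ + FTc v ξ := by
        rw [FTc_real_eq, FTc_real_eq, FTc_real_eq, ← integral_add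
          (FTc_integrand_integrable hu1 ξ) (FTc_integrand_integrable hv1 ξ)]
        congr 1
        ext s
        ring
      rw [hsplit]
      have := hcase ξ
      exact this
    have := ae_zero_of_fourier_zero (hu1.add hv1) hF0
    filter_upwards [this] with t ht
    have : u t + v t = 0 := by simpa using ht
    simp [Pi.neg_apply, eq_neg_of_add_eq_zero_left this]
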